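/- Let k ≥ 1 and n ≥ 1. For all x, y ∈ (Z/2k)^n, the Euclidean weights satisfy the congruence wt_E(x+y) ≡ wt_E(x) + wt_E(y) + 2·r(⟨x,y⟩) (mod 4k), where ⟨x,y⟩ = Σ_{i=1}^n x_i y_i ∈ Z/2k and r(c) ∈ {0,…,2k−1} denotes the standard integer representative of c ∈ Z/2k. -/

import Mathlib

open Finset

/-- Inner product of two vectors over `ZMod N`. -/
def innerZ {N n : ℕ} (x y : Fin n → ZMod N) : ZMod N := ∑ i, x i * y i

/-- Euclidean weight of a vector over `ZMod N`. -/
def euclWt {N n : ℕ} (x : Fin n → ZMod N) : ℕ :=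
  ∑ i, min ((x i).val ^ 2) ((N - (x i).val) ^ 2)

/-- Number of coordinates of `x` equal to `a`. -/
def cntEq {N n : ℕ} (a : ZMod N) (x : Fin n → ZMod N) : ℕ :=
  (Finset.univ.filter fun j => x j = a).card

/-- A code is self-dual if it equals its dual. -/
def IsSelfDual {N n : ℕ} (C : AddSubgroup (Fin n → ZMod N)) : Prop :=
  ∀ x, x ∈ C ↔ ∀ y ∈ C, innerZ x y = 0

/-- The subcode `{v ∈ C : ⟨w, v⟩ = 0}`. -/
def evenPart {N n : ℕ} (C : AddSubgroup (Fin n → ZMod N)) (w : Fin n → ZMod N) :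
    AddSubgroup (Fin n → ZMod N) where
  carrier := {v | v ∈ C ∧ innerZ w v = 0}
  zero_mem' := ⟨C.zero_mem, by simp [innerZ]⟩
  add_mem' := by
    rintro a b ⟨ha, ha0⟩ ⟨hb, hb0⟩
    refine ⟨C.add_mem ha hb, ?_⟩
    have h : innerZ w (a + b) = innerZ w a + innerZ w b := by
      simp [innerZ, mul_add, Finset.sum_add_distrib]
    rw [h, ha0, hb0, add_zero]
  neg_mem' := by
    rintro a ⟨ha, ha0⟩
    refine ⟨C.neg_mem ha, ?_⟩
    have h : innerZ w (-a) = - innerZ w a := by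
      simp [innerZ]
    rw [h, ha0, neg_zero]

/-- `kv` extended to all of `ℕ` by zero. -/
def extk {m : ℕ} (kv : Fin m → ℕ) : ℕ → ℕ := fun t => if h : t < m then kv ⟨t, h⟩ else 0

/-- Partial sums `k_1 + ⋯ + k_j`. -/
def psum {m : ℕ} (kv : Fin m → ℕ) (j : ℕ) : ℕ := ∑ t ∈ Finset.range j, extk kv t

/-- `G` is a generator matrix in standard form of type `(k_1, …, k_m)`. -/
def StandardForm {N : ℕ} {m n : ℕ} (kv : Fin m → ℕ)
    (G : Fin (psum kv m) → Fin n → ZMod N) : Prop :=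
  psum kv m ≤ n ∧
  ∀ (j : Fin m) (r : Fin (psum kv m)), psum kv (j : ℕ) ≤ (r : ℕ) → (r : ℕ) < psum kv ((j : ℕ) + 1) →
    ∀ c : Fin n,
      (∀ l : Fin m, psum kv (l : ℕ) ≤ (c : ℕ) → (c : ℕ) < psum kv ((l : ℕ) + 1) →
        (l < j → G r c = 0) ∧
        (l = j → G r c = if (r : ℕ) = (c : ℕ) then (2 ^ (j : ℕ) : ZMod N) else 0)) ∧
      ((psum kv m ≤ (c : ℕ) ∨
        ∃ l : Fin m, j < l ∧ psum kv (l : ℕ) ≤ (c : ℕ) ∧ (c : ℕ) < psum kv ((l : ℕ) + 1)) →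
        ∃ a : ZMod N, G r c = 2 ^ (j : ℕ) * a)

/-- The minimum Euclidean weight over nonzero codewords equals `d`. -/
def minEuclWtIs {N n : ℕ} (C : AddSubgroup (Fin n → ZMod N)) (d : ℕ) : Prop :=
  (∀ x ∈ C, x ≠ 0 → d ≤ euclWt x) ∧ ∃ x ∈ C, x ≠ 0 ∧ euclWt x = d

/-- Coordinatewise reduction modulo 4. -/
def res4 {n : ℕ} : (Fin n → ZMod 8) →+ (Fin n → ZMod 4) where
  toFun := fun x i => ZMod.castHom (by norm_num : (4 : ℕ) ∣ 8) (ZMod 4) (x i)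
  map_zero' := by ext i; simp
  map_add' := by intro a b; ext i; exact map_add (ZMod.castHom (by norm_num) _) _ _

/-- Coordinatewise reduction modulo 2. -/
def res2 {n : ℕ} : (Fin n → ZMod 8) →+ (Fin n → ZMod 2) where
  toFun := fun x i => ZMod.castHom (by norm_num : (2 : ℕ) ∣ 8) (ZMod 2) (x i)
  map_zero' := by ext i; simp
  map_add' := by intro a b; ext i; exact map_add (ZMod.castHom (by norm_num) _) _ _

/-- Hamming weight of a binary vector. -/
def hammingWt {n : ℕ} (y : Fin n → ZMod 2) : ℕ :=
  (Finset.univ.filter fun i => y i ≠ 0).card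

/-- Equivalence of codes: a permutation of coordinates combined with sign changes. -/
def codeEquiv {N n : ℕ} (C C' : AddSubgroup (Fin n → ZMod N)) : Prop :=
  ∃ (σ : Equiv.Perm (Fin n)) (ε : Fin n → ZMod N),
    (∀ i, ε i = 1 ∨ ε i = -1) ∧
    ∀ y, y ∈ C' ↔ ∃ x ∈ C, y = fun i => ε i * x (σ i)

/-- `wt_E(x+y) ≡ wt_E(x) + wt_E(y) + 2⟨x,y⟩ (mod 4k)`. -/
lemma modEq_sum' {α : Type*} (s : Finset α) (f g : α → ℤ) (m : ℤ)
    (h : ∀ i ∈ s, f i ≡ g i [ZMOD m]) : ∑ i ∈ s, f i ≡ ∑ i ∈ s, g i [ZMOD m] := by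
  classical
  induction s using Finset.induction_on with
  | empty => rfl
  | insert _ _ hx ih =>
    rw [Finset.sum_insert hx, Finset.sum_insert hx]
    exact (h _ (Finset.mem_insert_self _ _)).add
      (ih fun i hi => h i (Finset.mem_insert_of_mem hi))

lemma sq_modEq_of_modEq {a b k : ℤ} (h : a ≡ b [ZMOD 2 * k]) :
    a ^ 2 ≡ b ^ 2 [ZMOD 4 * k] := by
  obtain ⟨t, ht⟩ := Int.ModEq.dvd h
  have hb : b = a + 2 * k * t := by linarith
  subst hb
  exact Int.modEq_iff_dvd.mpr ⟨t * a + k * t ^ 2, by ring⟩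

theorem euclWt_add_congr {k n : ℕ} (hk : 1 ≤ k) (hn : 1 ≤ n)
    (x y : Fin n → ZMod (2 * k)) :
    euclWt (x + y) ≡ euclWt x + euclWt y + 2 * (innerZ x y).val [MOD 4 * k] := by
  haveI : NeZero (2 * k) := ⟨by omega⟩
  rw [← Int.natCast_modEq_iff]
  have hc : ((4 * k : ℕ) : ℤ) = 4 * (k : ℤ) := by push_cast; ring
  rw [show (Nat.cast (4 * k) : ℤ) = 4 * (k : ℤ) from hc]
  -- weight mod 4k equals sum of squares of values
  have hwt : ∀ z : Fin n → ZMod (2 * k),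
      ((euclWt z : ℕ) : ℤ) ≡ ∑ i, ((z i).val : ℤ) ^ 2 [ZMOD 4 * (k : ℤ)] := by
    intro z
    rw [euclWt, Nat.cast_sum]
    refine modEq_sum' _ _ _ _ fun i _ => ?_
    have hv : (z i).val < 2 * k := ZMod.val_lt _
    rw [Nat.cast_min, Nat.cast_pow, Nat.cast_pow, Nat.cast_sub hv.le]
    rcases min_cases (((z i).val : ℤ) ^ 2) ((↑(2 * k) - ((z i).val : ℤ)) ^ 2) with
      ⟨h, _⟩ | ⟨h, _⟩ <;> rw [h]
    · refine Int.modEq_iff_dvd.mpr ⟨((z i).val : ℤ) - k, ?_⟩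
      push_cast
      ring
  -- values of sum
  have hval : ∀ i, (((x + y) i).val : ℤ) ≡ ((x i).val : ℤ) + ((y i).val : ℤ)
      [ZMOD 2 * (k : ℤ)] := by
    intro i
    have h1 : ((x + y) i).val ≡ (x i).val + (y i).val [MOD 2 * k] := by
      show ((x i + y i).val) ≡ _ [MOD 2 * k]
      rw [ZMod.val_add]
      exact Nat.mod_modEq _ _
    have := Int.natCast_modEq_iff.mpr h1
    push_cast at this ⊢
    exact this
  -- inner product
  have hip : ((innerZ x y).val : ℤ) ≡ ∑ i, ((x i).val : ℤ) * ((y i).val : ℤ)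
      [ZMOD 2 * (k : ℤ)] := by
    have h1 : (((innerZ x y).val : ℕ) : ZMod (2 * k)) =
        ((∑ i, (x i).val * (y i).val : ℕ) : ZMod (2 * k)) := by
      push_cast
      simp [innerZ, ZMod.natCast_val, ZMod.cast_id]
    have h2 := (ZMod.natCast_eq_natCast_iff _ _ _).mp h1
    have := Int.natCast_modEq_iff.mpr h2
    push_cast at this ⊢
    exact this
  calc ((euclWt (x + y) : ℕ) : ℤ)
      ≡ ∑ i, (((x + y) i).val : ℤ) ^ 2 [ZMOD 4 * (k : ℤ)] := hwt _
    _ ≡ ∑ i, (((x i).val : ℤ) + ((y i).val : ℤ)) ^ 2 [ZMOD 4 * (k : ℤ)] :=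
        modEq_sum' _ _ _ _ fun i _ => sq_modEq_of_modEq (hval i)
    _ = (∑ i, ((x i).val : ℤ) ^ 2) + (∑ i, ((y i).val : ℤ) ^ 2) +
          2 * ∑ i, ((x i).val : ℤ) * ((y i).val : ℤ) := by
        rw [Finset.mul_sum, ← Finset.sum_add_distrib, ← Finset.sum_add_distrib]
        exact Finset.sum_congr rfl fun i _ => by ring
    _ ≡ ((euclWt x : ℕ) : ℤ) + ((euclWt y : ℕ) : ℤ) + 2 * (((innerZ x y).val : ℕ) : ℤ)
        [ZMOD 4 * (k : ℤ)] := by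
        refine Int.ModEq.add (Int.ModEq.add (hwt x).symm (hwt y).symm) ?_
        have : (2 : ℤ) * (k : ℤ) ∣ (∑ i, ((x i).val : ℤ) * ((y i).val : ℤ)) -
            ((innerZ x y).val : ℤ) := Int.ModEq.dvd hip
        obtain ⟨t, ht⟩ := this
        exact (Int.modEq_iff_dvd.mpr ⟨t, by linarith⟩).symm
    _ = ((euclWt x + euclWt y + 2 * (innerZ x y).val : ℕ) : ℤ) := by push_cast; ring
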